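/- Let (A, σ) be a difference ring such that A is a nontrivial commutative noetherian ring, σ : A → A is a flat ring endomorphism (i.e. A is flat as an A-module via σ), and (A, σ) is simple. Let M be a finitely generated A-module equipped with a σ-semilinear additive map Σ : M → M (Σ(a·m) = σ(a)·Σ(m)) which is étale, i.e. the A-linear map A_σ ⊗_A M → M induced by λ ⊗ m ↦ λ·Σ(m) is bijective, where A_σ denotes A viewed as a right A-module via σ (with its left A-module structure by multiplication). Then M is a projective A-module. (Part (1) of the paper's Proposition that finitely generated étale difference modules over a simple noetherian difference ring with flat endomorphism are projective.) -/

import Mathlib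

universe u v

open TensorProduct

/-- Type synonym: an `A`-module `M` with its `A`-module structure twisted by the ring
endomorphism `σ : A →+* A`, i.e. `a • m = σ a • m`.  For `M = A` this is the module `A_σ`
("`A` regarded as a module over itself via `σ`"). -/
@[nolint unusedArguments]
def Twist {A : Type u} [CommRing A] (_σ : A →+* A) (M : Type v) : Type v := M

instance {A : Type u} [CommRing A] (σ : A →+* A) (M : Type v) [AddCommGroup M] :
    AddCommGroup (Twist σ M) := inferInstanceAs (AddCommGroup M)

instance {A : Type u} [CommRing A] (σ : A →+* A) (M : Type v) [AddCommGroup M] [Module A M] :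
    Module A (Twist σ M) := Module.compHom M σ

/-- The identity map, regarded as a map from the twisted module to the original one. -/
def Twist.out {A : Type u} [CommRing A] {σ : A →+* A} {M : Type v} (m : Twist σ M) : M := m

@[simp] lemma Twist.out_zero {A : Type u} [CommRing A] {σ : A →+* A} {M : Type v}
    [AddCommGroup M] : (0 : Twist σ M).out = 0 := rfl

@[simp] lemma Twist.out_add {A : Type u} [CommRing A] {σ : A →+* A} {M : Type v}
    [AddCommGroup M] (x y : Twist σ M) : (x + y).out = x.out + y.out := rfl

@[simp] lemma Twist.out_smul {A : Type u} [CommRing A] {σ : A →+* A} {M : Type v}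
    [AddCommGroup M] [Module A M] (a : A) (x : Twist σ M) :
    (a • x).out = σ a • x.out := rfl

/-- The canonical additive map `A_σ ⊗_A M → M` induced by `λ ⊗ m ↦ λ · Σ(m)`, for a
`σ`-semilinear additive endomorphism `Σ` of the `A`-module `M`.  The difference module
`(M, Σ)` is *étale* precisely when this map is bijective. -/
noncomputable def etaleLift {A : Type u} [CommRing A] (σ : A →+* A)
    {M : Type v} [AddCommGroup M] [Module A M]
    (S : M →+ M) (hS : ∀ (a : A) (m : M), S (a • m) = σ a • S m) :
    TensorProduct A (Twist σ A) M →+ M :=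
  TensorProduct.liftAddHom
    { toFun := fun lam =>
        { toFun := fun m => lam.out • S m
          map_zero' := by simp
          map_add' := fun m n => by simp [smul_add] }
      map_zero' := by
        ext m
        simp
      map_add' := fun x y => by
        ext m
        simp [add_smul] }
    (by
      intro a lam m
      show (a • lam).out • S m = lam.out • S (a • m)
      rw [Twist.out_smul, hS, smul_assoc]
      exact smul_comm _ _ _)

section Aux

variable {A : Type u} [CommRing A] (σ : A →+* A)

instance Twist.instCommRing : CommRing (Twist σ A) := inferInstanceAs (CommRing A)

/-- `σ`, viewed as a ring hom `A →+* A_σ`. -/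
def Twist.ringHom : A →+* Twist σ A := σ

instance Twist.instAlgebra : Algebra A (Twist σ A) := (Twist.ringHom σ).toAlgebra

variable {M : Type v} [AddCommGroup M] [Module A M]
variable (S : M →+ M) (hS : ∀ (a : A) (m : M), S (a • m) = σ a • S m)

lemma etaleLift_tmul (lam : Twist σ A) (m : M) :
    etaleLift σ S hS (lam ⊗ₜ[A] m) = lam.out • S m := by
  simp [etaleLift]

/-- Key stability property of the free locus of an étale difference module. -/
lemma key_freeLocus (hetale : Function.Bijective (etaleLift σ S hS))
    (p : PrimeSpectrum A)
    (hq : PrimeSpectrum.comap σ p ∈ Module.freeLocus A M) :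
    p ∈ Module.freeLocus A M := by
  letI instBM : Module (Twist σ A) M := inferInstanceAs (Module A M)
  letI : Module (Twist σ A) (Twist σ A ⊗[A] M) :=
    @TensorProduct.leftModule A (Twist σ A) _ _ (Twist σ A) M _ _ _ _ _
      ⟨fun a b c => mul_left_comm (σ a : A) (b : A) (c : A)⟩
  let P : PrimeSpectrum (Twist σ A) := p
  have hq' : PrimeSpectrum.comap (algebraMap A (Twist σ A)) P ∈ Module.freeLocus A M := hq
  have h2 : P ∈ Module.freeLocus (Twist σ A) (TensorProduct A (Twist σ A) M) :=
    Module.comap_freeLocus_le (R := A) (A := Twist σ A) (M := M) hq'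
  let f : TensorProduct A (Twist σ A) M →ₗ[Twist σ A] M :=
    { toFun := etaleLift σ S hS
      map_add' := map_add _
      map_smul' := by
        intro b x
        induction x using TensorProduct.induction_on with
        | zero => simp
        | tmul lam m =>
            rw [show b • (lam ⊗ₜ[A] m) = (b • lam) ⊗ₜ[A] m from rfl]
            simp only [RingHom.id_apply, etaleLift_tmul]
            show ((b * lam : Twist σ A)).out • S m = b • (lam.out • S m)
            exact mul_smul b lam.out (S m)
        | add x y hx hy =>
            simp only [smul_add, map_add, RingHom.id_apply]
            exact congrArg₂ (· + ·) hx hy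
    }
  let e : TensorProduct A (Twist σ A) M ≃ₗ[Twist σ A] M :=
    LinearEquiv.ofBijective f (by exact hetale)
  have h3 : P ∈ Module.freeLocus (Twist σ A) M := by
    rwa [Module.freeLocus_congr e] at h2
  exact h3

end Aux

/-- **Part (1) of Proposition 7.1 of Nagy–Szamuely**: a finitely generated étale difference
module over a simple noetherian difference ring `(A, σ)` with flat endomorphism `σ` is a
projective `A`-module. -/
theorem stmt13 (A : Type u) [CommRing A] [Nontrivial A] [IsNoetherianRing A]
    (σ : A →+* A) (hflat : RingHom.Flat σ)
    (hsimple : ∀ I : Ideal A, (∀ x ∈ I, σ x ∈ I) → I = ⊥ ∨ I = ⊤)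
    (M : Type v) [AddCommGroup M] [Module A M] [Module.Finite A M]
    (S : M →+ M) (hS : ∀ (a : A) (m : M), S (a • m) = σ a • S m)
    (hetale : Function.Bijective (etaleLift σ S hS)) :
    Module.Projective A M := by
  haveI := Module.finitePresentation_of_finite A M
  rw [← Module.freeLocus_eq_univ_iff]
  set Z := (Module.freeLocus A M)ᶜ with hZdef
  have hstable : ∀ x ∈ PrimeSpectrum.vanishingIdeal Z, σ x ∈ PrimeSpectrum.vanishingIdeal Z := by
    intro x hx
    rw [PrimeSpectrum.mem_vanishingIdeal] at hx ⊢
    intro p hp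
    have hqZ : PrimeSpectrum.comap σ p ∈ Z := by
      intro hfree
      exact hp (key_freeLocus σ S hS hetale p hfree)
    have hxq := hx _ hqZ
    rwa [PrimeSpectrum.comap_asIdeal, Ideal.mem_comap] at hxq
  rcases hsimple _ hstable with hbot | htop
  · -- the vanishing ideal of the non-free locus is ⊥, so the non-free locus is everything;
    -- we derive a contradiction by producing a point of the free locus (a minimal prime).
    exfalso
    have hZclosed : IsClosed Z := (Module.isOpen_freeLocus (R := A) (M := M)).isClosed_compl
    have hZuniv : Z = Set.univ := by
      have h1 := PrimeSpectrum.zeroLocus_vanishingIdeal_eq_closure Z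
      rw [hZclosed.closure_eq, hbot] at h1
      rw [← h1]
      simp
    -- A is reduced
    have hnil : ∀ x ∈ nilradical A, σ x ∈ nilradical A := by
      intro x hx
      exact mem_nilradical.mpr (IsNilpotent.map (mem_nilradical.mp hx) σ)
    haveI hred : IsReduced A := by
      rcases hsimple _ hnil with h | h
      · refine ⟨fun x hx => ?_⟩
        have : x ∈ nilradical A := mem_nilradical.mpr hx
        rwa [h, Ideal.mem_bot] at this
      · exfalso
        have h1 : (1 : A) ∈ nilradical A := h ▸ Submodule.mem_top
        obtain ⟨n, hn⟩ := mem_nilradical.mp h1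
        rw [one_pow] at hn
        exact one_ne_zero hn
    -- a minimal prime
    obtain ⟨mI, hmI⟩ := Ideal.exists_maximal A
    haveI := hmI.isPrime
    obtain ⟨q, hqmin, -⟩ := Ideal.exists_minimalPrimes_le (I := (⊥ : Ideal A)) (J := mI) bot_le
    haveI hqprime : q.IsPrime := hqmin.1.1
    have hqmin' : q ∈ minimalPrimes A := hqmin
    -- the localization at a minimal prime of a reduced ring is a field
    have hfield : IsField (Localization.AtPrime q) := by
      rw [IsLocalRing.isField_iff_maximalIdeal_eq]
      rw [eq_bot_iff]
      intro x hx
      have hnilx : IsNilpotent x :=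
        (have : Ring.KrullDimLE 0 (Localization.AtPrime q) := .of_isLocalization _ hqmin' _
         Ring.KrullDimLE.isNilpotent_iff_mem_maximalIdeal.mpr hx)
      have : IsReduced (Localization.AtPrime q) := inferInstance
      simpa [Ideal.mem_bot] using IsReduced.eq_zero x hnilx
    -- hence `M` is free at `q`
    have hqfree : (⟨q, hqprime⟩ : PrimeSpectrum A) ∈ Module.freeLocus A M := by
      rw [Module.mem_freeLocus]
      letI : Field (Localization.AtPrime q) := hfield.toField
      exact Module.Free.of_divisionRing _ _
    have : (⟨q, hqprime⟩ : PrimeSpectrum A) ∈ Z := hZuniv ▸ Set.mem_univ _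
    exact this hqfree
  · -- the vanishing ideal of the non-free locus is ⊤, so the non-free locus is empty
    have hsub : Z ⊆ PrimeSpectrum.zeroLocus ((⊤ : Ideal A) : Set A) := by
      rw [← htop]
      exact PrimeSpectrum.subset_zeroLocus_vanishingIdeal Z
    rw [PrimeSpectrum.zeroLocus_empty_of_one_mem (Submodule.mem_top)] at hsub
    have hZempty : Z = ∅ := Set.subset_empty_iff.mp hsub
    rw [← Set.compl_empty, ← hZempty, hZdef, compl_compl]
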